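/- With the matching M on 2^[n+2] defined from I = (u_1, u_2, x_1^{e_1},...,x_n^{e_n}) via the four edge families (T,T∖{1}) with {1,2}∪P_1 ⊆ T; (T,T∖{2}) with {1,2}∪P_2 ⊆ T and P_1 ⊄ T; (T,T∖{1}) with 1∈T, 2∉T, A ⊆ T; (T,T∖{2}) with 1∉T, 2∈T, B ⊆ T, T ≠ [n+2]∖{1}: every edge of M is homogeneous, i.e., m_T = m_{T'} for each (T,T') ∈ M. -/

import Mathlib

open Finset

def v1 {n : ℕ} : Fin 2 ⊕ Fin n := Sum.inl 0
def v2 {n : ℕ} : Fin 2 ⊕ Fin n := Sum.inl 1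

/-- Generators of `I`: index `inl 0 ↦ u₁` (exponents `a`), `inl 1 ↦ u₂` (exponents `b`),
`inr i ↦ x_i^{e_i}`; monomials modeled as exponent vectors. -/
def gen {n : ℕ} (a b e : Fin n → ℕ) : Fin 2 ⊕ Fin n → Fin n → ℕ :=
  Sum.elim (fun t => if t = 0 then a else b) (fun i j => if j = i then e i else 0)

/-- The lcm label `m_T` of a subset of generators (pointwise max of exponent vectors). -/
def mT {n : ℕ} (a b e : Fin n → ℕ) (T : Finset (Fin 2 ⊕ Fin n)) : Fin n → ℕ :=
  fun i => T.sup fun k => gen a b e k i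

def P0 {n : ℕ} (a b : Fin n → ℕ) : Finset (Fin 2 ⊕ Fin n) :=
  (Finset.univ.filter fun i => a i = b i).image Sum.inr

def P1 {n : ℕ} (a b : Fin n → ℕ) : Finset (Fin 2 ⊕ Fin n) :=
  (Finset.univ.filter fun i => b i < a i).image Sum.inr

def P2 {n : ℕ} (a b : Fin n → ℕ) : Finset (Fin 2 ⊕ Fin n) :=
  (Finset.univ.filter fun i => a i < b i).image Sum.inr

def setA {n : ℕ} (a : Fin n → ℕ) : Finset (Fin 2 ⊕ Fin n) :=
  (Finset.univ.filter fun i => 0 < a i).image Sum.inr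

def setB {n : ℕ} (b : Fin n → ℕ) : Finset (Fin 2 ⊕ Fin n) :=
  (Finset.univ.filter fun i => 0 < b i).image Sum.inr

/-- The matching `M` on the Hasse diagram of `2^[n+2]`: `MM a b T T'` means `(T,T')` is an
edge of the matching, given by the four families of the paper. -/
def MM {n : ℕ} (a b : Fin n → ℕ) (T T' : Finset (Fin 2 ⊕ Fin n)) : Prop :=
  (v1 ∈ T ∧ v2 ∈ T ∧ P1 a b ⊆ T ∧ T' = T.erase v1) ∨
  (v1 ∈ T ∧ v2 ∈ T ∧ ¬ P1 a b ⊆ T ∧ P2 a b ⊆ T ∧ T' = T.erase v2) ∨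
  (v1 ∈ T ∧ v2 ∉ T ∧ setA a ⊆ T ∧ T' = T.erase v1) ∨
  (v1 ∉ T ∧ v2 ∈ T ∧ setB b ⊆ T ∧ T ≠ Finset.univ.erase v1 ∧ T' = T.erase v2)

/-- `T` is an `M`-critical vertex: it is incident to no edge of the matching. -/
def critical {n : ℕ} (a b : Fin n → ℕ) (T : Finset (Fin 2 ⊕ Fin n)) : Prop :=
  ∀ T', ¬ MM a b T T' ∧ ¬ MM a b T' T


lemma key {n : ℕ} (a b e : Fin n → ℕ) (T : Finset (Fin 2 ⊕ Fin n)) (v : Fin 2 ⊕ Fin n)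
    (h : ∀ i, gen a b e v i ≤ (T.erase v).sup fun k => gen a b e k i) :
    mT a b e T = mT a b e (T.erase v) := by
  funext i
  apply le_antisymm
  · apply Finset.sup_le
    intro k hk
    by_cases hkv : k = v
    · subst hkv; exact h i
    · exact Finset.le_sup (f := fun k => gen a b e k i) (Finset.mem_erase.mpr ⟨hkv, hk⟩)
  · exact Finset.sup_mono (Finset.erase_subset _ _)

/-- every edge of the matching `M` is homogeneous: `m_T = m_{T'}`. -/
theorem stmt8 (n : ℕ) (a b e : Fin n → ℕ) (hab : ∀ i, 0 < a i + b i)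
    (he : ∀ i, max (a i) (b i) < e i)
    (T T' : Finset (Fin 2 ⊕ Fin n)) (h : MM a b T T') :
    mT a b e T = mT a b e T' := by
  rcases h with ⟨h1, h2, hP, rfl⟩ | ⟨h1, h2, _, hP, rfl⟩ | ⟨h1, h2, hP, rfl⟩ | ⟨h1, h2, hP, _, rfl⟩
  · apply key
    intro i
    simp only [gen, v1, Sum.elim_inl, if_pos rfl]
    rcases le_or_gt (a i) (b i) with hle | hlt
    · calc a i ≤ b i := hle
        _ ≤ _ := by
          have hv2 : (v2 : Fin 2 ⊕ Fin n) ∈ T.erase v1 :=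
            Finset.mem_erase.mpr ⟨by simp [v1, v2], h2⟩
          have := Finset.le_sup (f := fun k => gen a b e k i) hv2
          simpa [gen, v1, v2] using this
    · have hmem : (Sum.inr i : Fin 2 ⊕ Fin n) ∈ T :=
        hP (by simp [P1, hlt])
      have hmem' : (Sum.inr i : Fin 2 ⊕ Fin n) ∈ T.erase v1 :=
        Finset.mem_erase.mpr ⟨by simp [v1], hmem⟩
      have := Finset.le_sup (f := fun k => gen a b e k i) hmem'
      simp only [gen, Sum.elim_inr, if_pos rfl] at this
      exact le_trans (le_of_lt (lt_of_le_of_lt (le_max_left _ _) (he i))) this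
  · apply key
    intro i
    simp only [gen, v2, Sum.elim_inl]
    rw [if_neg (by decide : (1 : Fin 2) ≠ 0)]
    rcases le_or_gt (b i) (a i) with hle | hlt
    · calc b i ≤ a i := hle
        _ ≤ _ := by
          have hv1 : (v1 : Fin 2 ⊕ Fin n) ∈ T.erase v2 :=
            Finset.mem_erase.mpr ⟨by simp [v1, v2], h1⟩
          have := Finset.le_sup (f := fun k => gen a b e k i) hv1
          simpa [gen, v1, v2] using this
    · have hmem : (Sum.inr i : Fin 2 ⊕ Fin n) ∈ T :=
        hP (by simp [P2, hlt])
      have hmem' : (Sum.inr i : Fin 2 ⊕ Fin n) ∈ T.erase v2 :=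
        Finset.mem_erase.mpr ⟨by simp [v2], hmem⟩
      have := Finset.le_sup (f := fun k => gen a b e k i) hmem'
      simp only [gen, Sum.elim_inr, if_pos rfl] at this
      exact le_trans (le_of_lt (lt_of_le_of_lt (le_max_right _ _) (he i))) this
  · apply key
    intro i
    simp only [gen, v1, Sum.elim_inl, if_pos rfl]
    rcases Nat.eq_zero_or_pos (a i) with h0 | hpos
    · simp [h0]
    · have hmem : (Sum.inr i : Fin 2 ⊕ Fin n) ∈ T :=
        hP (by simp [setA, hpos])
      have hmem' : (Sum.inr i : Fin 2 ⊕ Fin n) ∈ T.erase v1 :=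
        Finset.mem_erase.mpr ⟨by simp [v1], hmem⟩
      have := Finset.le_sup (f := fun k => gen a b e k i) hmem'
      simp only [gen, Sum.elim_inr, if_pos rfl] at this
      exact le_trans (le_of_lt (lt_of_le_of_lt (le_max_left _ _) (he i))) this
  · apply key
    intro i
    simp only [gen, v2, Sum.elim_inl]
    rw [if_neg (by decide : (1 : Fin 2) ≠ 0)]
    rcases Nat.eq_zero_or_pos (b i) with h0 | hpos
    · simp [h0]
    · have hmem : (Sum.inr i : Fin 2 ⊕ Fin n) ∈ T :=
        hP (by simp [setB, hpos])
      have hmem' : (Sum.inr i : Fin 2 ⊕ Fin n) ∈ T.erase v2 :=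
        Finset.mem_erase.mpr ⟨by simp [v2], hmem⟩
      have := Finset.le_sup (f := fun k => gen a b e k i) hmem'
      simp only [gen, Sum.elim_inr, if_pos rfl] at this
      exact le_trans (le_of_lt (lt_of_le_of_lt (le_max_right _ _) (he i))) this
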